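/- Every k-degenerate finite simple graph G on n ≥ k vertices has at most 2^k · (n − k + 1) nonempty cliques, i.e., the number of nonempty sets of pairwise adjacent vertices of G is at most 2^k · (n − k + 1). -/
import Mathlib


open SimpleGraph

/-- A graph is *k-degenerate* if every nonempty set `S` of vertices contains a
vertex with at most `k` neighbors inside `S`. -/
def IsKDegenerate {V : Type*} (G : SimpleGraph V) (k : ℕ) : Prop :=
  ∀ S : Set V, S.Nonempty → ∃ v ∈ S, {u ∈ S | G.Adj v u}.ncard ≤ k

universe u

lemma card_le_pow' {V : Type u} [Fintype V] (P : Finset V → Prop) :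
    Nat.card {s : Finset V // P s} ≤ 2 ^ Fintype.card V := by
  classical
  calc Nat.card {s : Finset V // P s} ≤ Nat.card (Finset V) :=
        Nat.card_le_card_of_injective Subtype.val Subtype.val_injective
    _ = 2 ^ Fintype.card V := by
        simp [Nat.card_eq_fintype_card]

lemma degenerate_induce {V : Type u} (G : SimpleGraph V) (k : ℕ)
    (hdeg : IsKDegenerate G k) (s₀ : Set V) :
    IsKDegenerate (G.induce s₀) k := by
  intro S hS
  obtain ⟨w, hwS, hw⟩ := hdeg (Subtype.val '' S) (hS.image _)
  obtain ⟨w', hw'S, rfl⟩ := hwS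
  refine ⟨w', hw'S, ?_⟩
  have himg : Subtype.val '' {u ∈ S | (G.induce s₀).Adj w' u} =
      {u ∈ Subtype.val '' S | G.Adj (↑w') u} := by
    ext u
    constructor
    · rintro ⟨u', ⟨hu'S, hadj⟩, rfl⟩
      exact ⟨⟨u', hu'S, rfl⟩, hadj⟩
    · rintro ⟨⟨u', hu'S, rfl⟩, hadj⟩
      exact ⟨u', ⟨hu'S, hadj⟩, rfl⟩
  calc {u ∈ S | (G.induce s₀).Adj w' u}.ncard
      = (Subtype.val '' {u ∈ S | (G.induce s₀).Adj w' u}).ncard :=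
        (Set.ncard_image_of_injective _ Subtype.val_injective).symm
    _ = {u ∈ Subtype.val '' S | G.Adj (↑w') u}.ncard := by rw [himg]
    _ ≤ k := hw

lemma aux_bound (k : ℕ) : ∀ (n : ℕ) (V : Type u) (_ : Fintype V) (G : SimpleGraph V),
    Fintype.card V = n → k ≤ n → IsKDegenerate G k →
    Nat.card {s : Finset V // s.Nonempty ∧ G.IsClique (s : Set V)} ≤ 2 ^ k * (n - k + 1) := by
  intro n
  induction n with
  | zero =>
    intro V _ G hcard hk _
    have hk0 : k = 0 := Nat.le_zero.mp hk
    subst hk0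
    have := card_le_pow' (V := V) (fun s : Finset V => s.Nonempty ∧ G.IsClique (s : Set V))
    rw [hcard] at this
    simpa using this
  | succ n ih =>
    intro V _ G hcard hk hdeg
    classical
    rcases eq_or_lt_of_le hk with h | h
    · -- k = n + 1 : trivial bound by total number of subsets
      have := card_le_pow' (V := V) (fun s : Finset V => s.Nonempty ∧ G.IsClique (s : Set V))
      rw [hcard, ← h] at this
      have hsub : n + 1 - k = 0 := by omega
      rw [hsub]
      simpa using this
    · have hkn : k ≤ n := Nat.lt_succ_iff.mp h
      have hne : Nonempty V := by
        rw [← Fintype.card_pos_iff, hcard]; omega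
      obtain ⟨v, -, hv⟩ := hdeg Set.univ Set.univ_nonempty
      have hvN : {u | G.Adj v u}.ncard ≤ k := by
        have : {u ∈ Set.univ | G.Adj v u} = {u | G.Adj v u} := by ext u; simp
        rwa [this] at hv
      set P : Finset V → Prop := fun s => s.Nonempty ∧ G.IsClique (s : Set V) with hP
      set A1 : Set (Finset V) := {s | P s ∧ v ∈ s} with hA1
      set A2 : Set (Finset V) := {s | P s ∧ v ∉ s} with hA2
      have hsplit : {s : Finset V | P s} = A1 ∪ A2 := by
        ext s; simp only [hA1, hA2, Set.mem_setOf_eq, Set.mem_union]; tauto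
      -- bound A1 : cliques containing v
      have hA1bound : A1.ncard ≤ 2 ^ k := by
        set N : Set V := {u | G.Adj v u} with hN
        have hmaps : ∀ s ∈ A1, s.erase v ∈ (N.toFinset.powerset : Set (Finset V)) := by
          rintro s ⟨⟨-, hclique⟩, hvs⟩
          simp only [Finset.coe_powerset, Set.mem_preimage, Set.mem_powerset_iff,
            Finset.coe_subset, Finset.mem_coe]
          intro u hu
          rw [Finset.mem_erase] at hu
          rw [Set.mem_toFinset]
          exact hclique (by exact_mod_cast hvs) (by exact_mod_cast hu.2) (Ne.symm hu.1)
        have hinj : Set.InjOn (fun s : Finset V => s.erase v) A1 := by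
          rintro s ⟨-, hvs⟩ t ⟨-, hvt⟩ hst
          have hst' : s.erase v = t.erase v := hst
          have : insert v (s.erase v) = insert v (t.erase v) := by rw [hst']
          rwa [Finset.insert_erase hvs, Finset.insert_erase hvt] at this
        calc A1.ncard ≤ (↑(N.toFinset.powerset) : Set (Finset V)).ncard :=
              Set.ncard_le_ncard_of_injOn _ hmaps hinj (Set.toFinite _)
          _ = N.toFinset.powerset.card := Set.ncard_coe_finset _
          _ = 2 ^ N.toFinset.card := Finset.card_powerset _
          _ ≤ 2 ^ k := by
              apply Nat.pow_le_pow_right (by norm_num)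
              rwa [← Set.ncard_eq_toFinset_card']
      -- bound A2 : cliques avoiding v, via the induced graph
      have hA2bound : A2.ncard ≤ 2 ^ k * (n - k + 1) := by
        set s₀ : Set V := {u | u ≠ v} with hs₀
        set G' : SimpleGraph s₀ := G.induce s₀ with hG'
        have hcard' : Fintype.card s₀ = n := by
          have : Fintype.card s₀ = Fintype.card {u : V // ¬ u = v} := by
            apply Fintype.card_congr; exact Equiv.refl _
          rw [this, Fintype.card_subtype_compl, Fintype.card_subtype_eq, hcard]
          omega
        have hdeg' : IsKDegenerate G' k := degenerate_induce G k hdeg s₀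
        set B : Set (Finset s₀) := {t | t.Nonempty ∧ G'.IsClique (t : Set s₀)} with hB
        have hBcard : B.ncard ≤ 2 ^ k * (n - k + 1) := by
          exact ih s₀ (by infer_instance) G' hcard' hkn hdeg'
        have hmaps : ∀ s ∈ A2, (s.subtype (· ∈ s₀)) ∈ B := by
          rintro s ⟨⟨hsne, hclique⟩, hvs⟩
          constructor
          · obtain ⟨x, hx⟩ := hsne
            have hxv : x ∈ s₀ := by
              simp only [hs₀, Set.mem_setOf_eq]
              rintro rfl; exact hvs hx
            exact ⟨⟨x, hxv⟩, by simp [Finset.mem_subtype, hx]⟩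
          · intro a ha b hb hab
            simp only [Finset.mem_coe, Finset.mem_subtype] at ha hb
            have : G.Adj (↑a) (↑b) :=
              hclique (by exact_mod_cast ha) (by exact_mod_cast hb)
                (fun hval => hab (Subtype.ext hval))
            exact this
        have hinj : Set.InjOn (fun s : Finset V => s.subtype (· ∈ s₀)) A2 := by
          rintro s ⟨-, hvs⟩ t ⟨-, hvt⟩ hst
          have hs : (s.subtype (· ∈ s₀)).map (Function.Embedding.subtype _) = s := by
            rw [Finset.subtype_map]
            apply Finset.filter_true_of_mem
            intro x hx
            simp only [hs₀, Set.mem_setOf_eq]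
            rintro rfl; exact hvs hx
          have ht : (t.subtype (· ∈ s₀)).map (Function.Embedding.subtype _) = t := by
            rw [Finset.subtype_map]
            apply Finset.filter_true_of_mem
            intro x hx
            simp only [hs₀, Set.mem_setOf_eq]
            rintro rfl; exact hvt hx
          rw [← hs, ← ht]
          simp only at hst
          rw [hst]
        calc A2.ncard ≤ B.ncard :=
              Set.ncard_le_ncard_of_injOn _ hmaps hinj (Set.toFinite _)
          _ ≤ 2 ^ k * (n - k + 1) := hBcard
      have hmain : Nat.card {s : Finset V // s.Nonempty ∧ G.IsClique (s : Set V)} =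
          {s : Finset V | P s}.ncard := by
        rw [← Nat.card_coe_set_eq]
        rfl
      rw [hmain, hsplit]
      calc (A1 ∪ A2).ncard ≤ A1.ncard + A2.ncard := Set.ncard_union_le _ _
        _ ≤ 2 ^ k + 2 ^ k * (n - k + 1) := Nat.add_le_add hA1bound hA2bound
        _ = 2 ^ k * (n + 1 - k + 1) := by
            have : n + 1 - k = (n - k) + 1 := by omega
            rw [this]; ring

theorem stmt8 {V : Type*} [Fintype V] (G : SimpleGraph V) (k : ℕ)
    (hk : k ≤ Fintype.card V) (hdeg : IsKDegenerate G k) :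
    Nat.card {s : Finset V // s.Nonempty ∧ G.IsClique (s : Set V)} ≤
      2 ^ k * (Fintype.card V - k + 1) := by
  exact aux_bound k (Fintype.card V) V inferInstance G rfl hk hdeg
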